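/- There exists a constant $C > 0$ such that for all integers $k \geq 1$ and all real numbers $v_1, \ldots, v_k$ with $|v_j| \geq 1$ for every $j$, $\int_{-1}^{1} \prod_{j=1}^{k} |\cos(2\pi \xi v_j)| \, d\xi \leq \frac{C}{\sqrt{k}}$. -/

import Mathlib

open Real MeasureTheory intervalIntegral

noncomputable def Wal (n : ℕ) : ℝ := ∫ x in (0:ℝ)..π, Real.sin x ^ n

lemma Wal_pos (n : ℕ) : 0 < Wal n := by unfold Wal; exact integral_sin_pow_pos n

lemma Wal_anti : Antitone Wal := integral_sin_pow_antitone

lemma Wal_rec (n : ℕ) : Wal (n + 2) = (n + 1) / (n + 2) * Wal n := by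
  unfold Wal
  rw [integral_sin_pow]
  simp [Real.sin_pi]

lemma Wal_mul (n : ℕ) : ((n : ℝ) + 1) * (Wal n * Wal (n + 1)) = 2 * π := by
  induction n with
  | zero => simp [Wal, integral_sin]; ring
  | succ m ih =>
    rw [show m + 1 + 1 = m + 2 from rfl, Wal_rec m]
    push_cast
    push_cast at ih
    have h2 : (m : ℝ) + 2 ≠ 0 := by positivity
    field_simp
    nlinarith [ih]

lemma Wal_le (k : ℕ) (hk : 1 ≤ k) : Wal k ≤ 4 / Real.sqrt k := by
  have hk1 : (1:ℝ) ≤ (k:ℝ) := by exact_mod_cast hk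
  have hkpos : (0:ℝ) < (k:ℝ) := by positivity
  have hW2 : Wal k / 2 ≤ Wal (k + 1) := by
    have h1 : Wal (k + 2) ≤ Wal (k + 1) := Wal_anti (by omega)
    have h2 : Wal (k + 2) = (k + 1) / (k + 2) * Wal k := Wal_rec k
    have h3 : (1:ℝ)/2 ≤ ((k:ℝ) + 1) / ((k:ℝ) + 2) := by
      rw [div_le_div_iff₀ (by norm_num) (by positivity)]
      linarith
    nlinarith [Wal_pos k, Wal_pos (k+1)]
  have hm := Wal_mul k
  have hpi : π ≤ 4 := by linarith [Real.pi_le_four]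
  have h4 : Wal k * (Wal k / 2) ≤ Wal k * Wal (k + 1) :=
    mul_le_mul_of_nonneg_left hW2 (Wal_pos k).le
  have h6 : Wal k ^ 2 * ((k:ℝ) + 1) ≤ 4 * π := by nlinarith [Wal_pos (k+1)]
  have hksq : Wal k ^ 2 ≤ 16 / (k:ℝ) := by
    rw [le_div_iff₀ hkpos]
    nlinarith [sq_nonneg (Wal k)]
  have h0 : (0:ℝ) ≤ 4 / Real.sqrt k := by positivity
  calc Wal k = Real.sqrt (Wal k ^ 2) := (Real.sqrt_sq (Wal_pos k).le).symm
    _ ≤ Real.sqrt ((4 / Real.sqrt k) ^ 2) := by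
        apply Real.sqrt_le_sqrt
        rw [div_pow, Real.sq_sqrt hkpos.le]
        norm_num
        exact hksq
    _ = 4 / Real.sqrt k := Real.sqrt_sq h0

lemma abscos_periodic (k : ℕ) : Function.Periodic (fun u : ℝ => |Real.cos u| ^ k) π := by
  intro x
  simp [Real.cos_add_pi, abs_neg]

lemma abscos_intble (k : ℕ) (a b : ℝ) :
    IntervalIntegrable (fun u : ℝ => |Real.cos u| ^ k) volume a b := by
  apply Continuous.intervalIntegrable
  fun_prop

lemma integral_abscos (k : ℕ) : (∫ u in (0:ℝ)..π, |Real.cos u| ^ k) = Wal k := by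
  have h1 : (∫ u in (0:ℝ)..π, |Real.cos u| ^ k)
      = ∫ u in (-(π/2))..(π/2), |Real.cos u| ^ k := by
    have := (abscos_periodic k).intervalIntegral_add_eq (-(π/2)) 0
    rw [zero_add, show -(π/2) + π = π/2 by ring] at this
    exact this.symm
  have h2 : (∫ u in (-(π/2))..(π/2), |Real.cos u| ^ k)
      = ∫ x in (0:ℝ)..π, |Real.cos (x - π/2)| ^ k := by
    rw [intervalIntegral.integral_comp_sub_right (fun u => |Real.cos u| ^ k) (π/2)]
    rw [show (0:ℝ) - π/2 = -(π/2) by ring, show π - π/2 = π/2 by ring]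
  rw [h1, h2]
  unfold Wal
  apply intervalIntegral.integral_congr
  intro x hx
  rw [Set.uIcc_of_le Real.pi_pos.le] at hx
  show |Real.cos (x - π/2)| ^ k = Real.sin x ^ k
  have hs : Real.cos (x - π/2) = Real.sin x := by
    rw [Real.cos_sub]
    simp
  rw [hs, abs_of_nonneg (Real.sin_nonneg_of_mem_Icc hx)]

lemma single_bound (k : ℕ) (hk : 1 ≤ k) (v : ℝ) (hv : 1 ≤ v) :
    (∫ ξ in (-1:ℝ)..1, |Real.cos (2 * π * ξ * v)| ^ k) ≤ 4 / Real.sqrt k := by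
  have hvpos : 0 < v := by linarith
  set c : ℝ := 2 * π * v with hc
  have hcpos : 0 < c := by positivity
  have h1 : (∫ ξ in (-1:ℝ)..1, |Real.cos (2 * π * ξ * v)| ^ k)
      = c⁻¹ * ∫ u in (-c)..c, |Real.cos u| ^ k := by
    have heq : (∫ ξ in (-1:ℝ)..1, |Real.cos (2 * π * ξ * v)| ^ k)
        = ∫ ξ in (-1:ℝ)..1, |Real.cos (c * ξ)| ^ k := by
      apply intervalIntegral.integral_congr
      intro x _
      rw [hc]
      ring_nf
    rw [heq, intervalIntegral.integral_comp_mul_left (fun u => |Real.cos u| ^ k) hcpos.ne']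
    norm_num [smul_eq_mul]
  set n : ℕ := ⌈2 * v⌉₊ with hn
  have hn1 : 2 * v ≤ (n : ℝ) := Nat.le_ceil _
  have hn2 : (n : ℝ) ≤ 2 * v + 1 := by
    have := Nat.ceil_lt_add_one (by positivity : (0:ℝ) ≤ 2 * v)
    linarith
  have hcn : c ≤ n * π := by
    rw [hc]
    calc 2 * π * v = (2 * v) * π := by ring
      _ ≤ n * π := by
          apply mul_le_mul_of_nonneg_right hn1 Real.pi_pos.le
  have h2 : (∫ u in (-c)..c, |Real.cos u| ^ k)
      ≤ ∫ u in (-(n*π))..(n*π), |Real.cos u| ^ k := by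
    apply intervalIntegral.integral_mono_interval (by linarith) (by linarith) hcn
    · filter_upwards with x
      positivity
    · exact abscos_intble k _ _
  have h3 : (∫ u in (-(n*π))..(n*π), |Real.cos u| ^ k) = (2 * n : ℝ) * Wal k := by
    have := (abscos_periodic k).intervalIntegral_add_zsmul_eq (2 * n : ℤ) (-(n*π))
      (abscos_intble k)
    rw [show -((n:ℝ)*π) + (2 * n : ℤ) • π = (n : ℝ) * π by rw [zsmul_eq_mul]; push_cast; ring] at this
    rw [this]
    have h4 := (abscos_periodic k).intervalIntegral_add_eq (-(n*π)) 0
    rw [zero_add, integral_abscos] at h4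
    rw [h4, zsmul_eq_mul]
    push_cast
    ring
  have hW := Wal_le k hk
  have hWpos := Wal_pos k
  calc (∫ ξ in (-1:ℝ)..1, |Real.cos (2 * π * ξ * v)| ^ k)
      = c⁻¹ * ∫ u in (-c)..c, |Real.cos u| ^ k := h1
    _ ≤ c⁻¹ * ((2 * n : ℝ) * Wal k) := by
        apply mul_le_mul_of_nonneg_left _ (by positivity)
        calc (∫ u in (-c)..c, |Real.cos u| ^ k) ≤ _ := h2
          _ = (2 * n : ℝ) * Wal k := h3
    _ ≤ Wal k := by
        rw [hc]
        have hpi3 : (3:ℝ) ≤ π := by linarith [Real.pi_gt_three]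
        have hn3 : (n : ℝ) ≤ 3 * v := by linarith
        rw [inv_mul_le_iff₀ (by positivity)]
        have e1 : (2 * (n:ℝ)) * Wal k ≤ 6 * v * Wal k := by nlinarith
        have e2 : 6 * v * Wal k ≤ Wal k * (2 * π * v) := by
          nlinarith [mul_nonneg hvpos.le hWpos.le]
        linarith
    _ ≤ 4 / Real.sqrt k := hW

/-- There is a universal constant `C > 0` such that for all `k ≥ 1` and reals
`v₁, …, v_k` with `|v_j| ≥ 1`,
`∫_{-1}^{1} ∏_j |cos(2π ξ v_j)| dξ ≤ C / √k`. -/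
theorem integral_prod_cos_le :
    ∃ C : ℝ, 0 < C ∧ ∀ (k : ℕ), 1 ≤ k → ∀ v : Fin k → ℝ, (∀ j, 1 ≤ |v j|) →
      (∫ ξ in (-1 : ℝ)..1, ∏ j, |Real.cos (2 * π * ξ * v j)|) ≤ C / Real.sqrt k := by
  refine ⟨4, by norm_num, ?_⟩
  intro k hk v hv
  have hkR : (0:ℝ) < (k:ℝ) := by positivity
  have hk0 : (k:ℝ) ≠ 0 := hkR.ne'
  have hcoseq : ∀ (ξ : ℝ) (j : Fin k),
      |Real.cos (2*π*ξ*(v j))| = |Real.cos (2*π*ξ*|v j|)| := by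
    intro ξ j
    rcases abs_choice (v j) with h | h
    · rw [h]
    · rw [h, show 2*π*ξ*(-(v j)) = -(2*π*ξ*(v j)) by ring, Real.cos_neg]
  have hpt : ∀ ξ : ℝ, (∏ j, |Real.cos (2*π*ξ*|v j|)|)
      ≤ ∑ j, (1/(k:ℝ)) * |Real.cos (2*π*ξ*|v j|)|^k := by
    intro ξ
    have hsum : ∑ _j : Fin k, (1:ℝ)/(k:ℝ) = 1 := by
      rw [Finset.sum_const, Finset.card_univ, Fintype.card_fin, nsmul_eq_mul]
      field_simp
    have := Real.geom_mean_le_arith_mean_weighted Finset.univ (fun _ => 1/(k:ℝ))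
      (fun j => |Real.cos (2*π*ξ*|v j|)|^k) (fun i _ => by positivity)
      hsum (fun i _ => by positivity)
    calc ∏ j, |Real.cos (2*π*ξ*|v j|)|
        = ∏ j, (|Real.cos (2*π*ξ*|v j|)|^k) ^ ((1:ℝ)/(k:ℝ)) := by
          apply Finset.prod_congr rfl
          intro j _
          rw [← Real.rpow_natCast |Real.cos (2*π*ξ*|v j|)| k,
            ← Real.rpow_mul (abs_nonneg _),
            show (k:ℝ) * (1/(k:ℝ)) = 1 by field_simp, Real.rpow_one]
      _ ≤ _ := this
  have hint1 : IntervalIntegrable (fun ξ => ∏ j, |Real.cos (2*π*ξ*(v j))|)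
      volume (-1 : ℝ) 1 := by
    apply Continuous.intervalIntegrable
    apply continuous_finset_prod
    intro j _
    fun_prop
  have hint2 : IntervalIntegrable
      (fun ξ => ∑ j, (1/(k:ℝ)) * |Real.cos (2*π*ξ*|v j|)|^k) volume (-1 : ℝ) 1 := by
    apply Continuous.intervalIntegrable
    apply continuous_finset_sum
    intro j _
    fun_prop
  calc (∫ ξ in (-1:ℝ)..1, ∏ j, |Real.cos (2*π*ξ*(v j))|)
      ≤ ∫ ξ in (-1:ℝ)..1, ∑ j, (1/(k:ℝ)) * |Real.cos (2*π*ξ*|v j|)|^k := by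
        apply intervalIntegral.integral_mono_on (by norm_num) hint1 hint2
        intro ξ _
        calc ∏ j, |Real.cos (2*π*ξ*(v j))| = ∏ j, |Real.cos (2*π*ξ*|v j|)| :=
              Finset.prod_congr rfl fun j _ => hcoseq ξ j
          _ ≤ _ := hpt ξ
    _ = ∑ j, ∫ ξ in (-1:ℝ)..1, (1/(k:ℝ)) * |Real.cos (2*π*ξ*|v j|)|^k := by
        apply intervalIntegral.integral_finset_sum
        intro j _
        apply Continuous.intervalIntegrable
        fun_prop
    _ = ∑ j, (1/(k:ℝ)) * ∫ ξ in (-1:ℝ)..1, |Real.cos (2*π*ξ*|v j|)|^k := by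
        simp [intervalIntegral.integral_const_mul]
    _ ≤ ∑ _j : Fin k, (1/(k:ℝ)) * (4 / Real.sqrt k) := by
        apply Finset.sum_le_sum
        intro j _
        exact mul_le_mul_of_nonneg_left (single_bound k hk |v j| (hv j)) (by positivity)
    _ = 4 / Real.sqrt k := by
        rw [Finset.sum_const, Finset.card_univ, Fintype.card_fin, nsmul_eq_mul]
        field_simp
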